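/- Let I : H¹(ℝ^N) → ℝ be a C¹ functional, c > 0, and m(λ) = inf{ I(u) : ‖u‖₂² = λ }. Suppose λ ↦ m(λ) is non-increasing on (0, ∞). If v ∈ H¹(ℝ^N) minimizes I on the constraint ‖v‖₂² = c and satisfies the Euler–Lagrange equation I'(v) = β ⟨v, ·⟩_{L²} for some β ∈ ℝ (so that β = I'(v)v / ‖v‖₂²), then β ≤ 0. -/

import Mathlib

open Filter RealInnerProductSpace

/-- Sign of the Lagrange multiplier: for a `C¹` functional `I` with
`m(λ) = inf {I(u) : ‖u‖₂² = λ}` non-increasing on `(0,∞)`, any minimizer `v` of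
`I` on the constraint `‖v‖₂² = c` satisfying `I'(v) = β ⟨v,·⟩` has `β ≤ 0`.
(The Sobolev space `H¹(ℝ^N)` is modelled abstractly by a real Hilbert space.) -/
theorem stmt_16 {H : Type*} [NormedAddCommGroup H] [InnerProductSpace ℝ H]
    (I : H → ℝ) (hI : ContDiff ℝ 1 I)
    (m : ℝ → ℝ)
    (hm : ∀ lam : ℝ, 0 < lam → IsGLB (I '' {u : H | ‖u‖ ^ 2 = lam}) (m lam))
    (hmono : AntitoneOn m (Set.Ioi (0:ℝ)))
    (c : ℝ) (hc : 0 < c)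
    (v : H) (hv : ‖v‖ ^ 2 = c) (hmin : I v = m c)
    (β : ℝ) (hEL : ∀ w : H, fderiv ℝ I v w = β * ⟪v, w⟫) :
    β ≤ 0 := by
  by_contra hβ
  push_neg at hβ
  have hdI : HasFDerivAt I (fderiv ℝ I v) v :=
    ((hI.differentiable one_ne_zero) v).hasFDerivAt
  have h0 : ((1:ℝ) - 0) • v = v := by simp
  have hdI' : HasFDerivAt I (fderiv ℝ I v) (((1:ℝ) - 0) • v) := h0.symm ▸ hdI
  have hline : HasDerivAt (fun t : ℝ => (1 - t) • v) (-v) 0 := by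
    have h1 : HasDerivAt (fun t : ℝ => (1 : ℝ) - t) (-1) 0 := by
      simpa using (hasDerivAt_id (0:ℝ)).const_sub 1
    simpa using h1.smul_const v
  have hf : HasDerivAt (fun t : ℝ => I ((1 - t) • v)) (fderiv ℝ I v (-v)) 0 :=
    hdI'.comp_hasDerivAt 0 hline
  have hval : fderiv ℝ I v (-v) = -(β * c) := by
    rw [hEL (-v), inner_neg_right, real_inner_self_eq_norm_sq, hv]
    ring
  rw [hval] at hf
  have hneg : -(β * c) < 0 := by nlinarith
  -- slope tends to the derivative
  have hslope : Tendsto (slope (fun t : ℝ => I ((1 - t) • v)) 0) (nhdsWithin 0 {(0:ℝ)}ᶜ)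
      (nhds (-(β * c))) := hasDerivAt_iff_tendsto_slope.mp hf
  have hslope' : Tendsto (slope (fun t : ℝ => I ((1 - t) • v)) 0) (nhdsWithin 0 (Set.Ioi 0))
      (nhds (-(β * c))) :=
    hslope.mono_left (nhdsWithin_mono 0 (fun x hx => by
      simp only [Set.mem_compl_iff, Set.mem_singleton_iff]
      exact ne_of_gt hx))
  have hev : ∀ᶠ t in nhdsWithin (0:ℝ) (Set.Ioi 0),
      slope (fun t : ℝ => I ((1 - t) • v)) 0 t < 0 :=
    hslope'.eventually_lt_const hneg
  have hev2 : ∀ᶠ t in nhdsWithin (0:ℝ) (Set.Ioi 0), t ∈ Set.Ioo (0:ℝ) 1 :=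
    Ioo_mem_nhdsGT_of_mem ⟨le_refl 0, one_pos⟩
  obtain ⟨t, hts, htI⟩ := (hev.and hev2).exists
  obtain ⟨ht0, ht1⟩ := htI
  -- from the slope condition, I ((1-t)•v) < I v
  have hIlt : I ((1 - t) • v) < I v := by
    have hs : slope (fun t : ℝ => I ((1 - t) • v)) 0 t
        = (I ((1 - t) • v) - I v) / t := by
      simp [slope_def_field, h0]
    rw [hs] at hts
    have := (div_neg_iff).mp hts
    rcases this with ⟨h1, h2⟩ | ⟨h1, h2⟩
    · linarith
    · linarith
  set lam := ‖(1 - t) • v‖ ^ 2 with hlam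
  have hlamval : lam = (1 - t) ^ 2 * c := by
    rw [hlam, norm_smul, mul_pow, ← hv]
    congr 1
    rw [Real.norm_eq_abs, sq_abs]
  have hlampos : 0 < lam := by
    rw [hlamval]
    exact mul_pos (pow_pos (by linarith) 2) hc
  have hlamlt : lam < c := by
    rw [hlamval]
    nlinarith [mul_pos (mul_pos ht0 (show (0:ℝ) < 2 - t by linarith)) hc]
  have h1 : m lam ≤ I ((1 - t) • v) :=
    (hm lam hlampos).1 ⟨(1 - t) • v, rfl, rfl⟩
  have h2 : m c ≤ m lam := hmono hlampos hc (le_of_lt hlamlt)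
  rw [hmin] at hIlt
  linarith
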